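/- Suppose L₀ is large enough and assume that property (SS.N.I.k.n) holds. Then for any n-particle cube Λ_{L_{k+1}}^{(n)}(u), ℙ{K_{FI}(Λ_{L_{k+1}}^{(n)}(u)) ≥ 12} ≤ C'(n,d) L_{k+1}^{−(7/3)p^{(n)}}. -/

import Mathlib

open MeasureTheory ProbabilityTheory

namespace MP

/-- A point of the single-particle lattice `ℤ^d`. -/
abbrev Pt (d : ℕ) := Fin d → ℤ

/-- A configuration of `n` particles in `ℤ^d`, i.e. a point of `ℤ^{nd}`. -/
abbrev Cfg (n d : ℕ) := Fin n → Pt d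

/-- The max-norm `‖x‖ = max_i |x_i|` on `ℤ^d`. -/
def ptNorm {d : ℕ} (x : Pt d) : ℕ := Finset.univ.sup fun i => (x i).natAbs

/-- The max-norm `‖x‖ = max_j ‖x_j‖` on `ℤ^{nd}`. -/
def cfgNorm {n d : ℕ} (x : Cfg n d) : ℕ := Finset.univ.sup fun j => ptNorm (x j)

/-- `⟨x⟩ = max {1, ‖x‖}`. -/
def jap {n d : ℕ} (x : Cfg n d) : ℕ := max 1 (cfgNorm x)

/-- The `n`-particle cube of radius `L` centered at `u`. -/
noncomputable def cube {n d : ℕ} (L : ℕ) (u : Cfg n d) : Finset (Cfg n d) :=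
  Finset.Icc (fun j i => u j i - (L : ℤ)) (fun j i => u j i + (L : ℤ))

/-- Partial projection `Π_J Λ = ∪_{j∈J} Π_j Λ ⊆ ℤ^d`. -/
def projJ {n d : ℕ} (J : Finset (Fin n)) (Λ : Finset (Cfg n d)) : Finset (Pt d) :=
  J.biUnion fun j => Λ.image fun x => x j

/-- Full projection `ΠΛ = ∪_{j=1}^n Π_j Λ ⊆ ℤ^d`. -/
def projFull {n d : ℕ} (Λ : Finset (Cfg n d)) : Finset (Pt d) := projJ Finset.univ Λ

/-- Weak separability of the pair of `n`-particle cubes `Λ_L(u)`, `Λ_L(v)`. -/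
def WeaklySeparable {n d : ℕ} (r0 L : ℕ) (u v : Cfg n d) : Prop :=
  ∃ J : Finset (Fin n), J.Nonempty ∧
    (projJ J (cube (L + r0) u) ∩
        (projJ Jᶜ (cube (L + r0) u) ∪ projFull (cube (L + r0) v)) = ∅ ∨
      projJ J (cube (L + r0) v) ∩
        (projJ Jᶜ (cube (L + r0) v) ∪ projFull (cube (L + r0) u)) = ∅)

/-- Separability: weak separability together with `‖u - v‖ > 11 n L`. -/
def Separable {n d : ℕ} (r0 L : ℕ) (u v : Cfg n d) : Prop :=
  WeaklySeparable r0 L u v ∧ 11 * n * L < cfgNorm (u - v)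

/-- Complete separability: disjoint full projections of the `(L+r₀)`-cubes. -/
def CompletelySeparable {n d : ℕ} (r0 L : ℕ) (u v : Cfg n d) : Prop :=
  projFull (cube (L + r0) u) ∩ projFull (cube (L + r0) v) = ∅

/-- Distance `dist(u, 𝔻₀) = min_{x ∈ ℤ^d} max_j ‖u_j - x‖` to the diagonal. -/
noncomputable def diagDist {n d : ℕ} (u : Cfg n d) : ℕ :=
  sInf {m : ℕ | ∃ x : Pt d, ∀ j, ptNorm (u j - x) ≤ m}

/-- Fully interactive cube. -/
def IsFI {n d : ℕ} (r0 L : ℕ) (u : Cfg n d) : Prop := diagDist u ≤ 2 * n * (L + r0)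

/-- Partially interactive cube. -/
def IsPI {n d : ℕ} (r0 L : ℕ) (u : Cfg n d) : Prop := ¬ IsFI r0 L u

/-- The power-law long-range hopping kernel (Assumption A):
`T(x,y) = ⟨y_j - x_j⟩^{-r}` if `x_i = y_i` for all `i ≠ j`, and `0` otherwise. -/
noncomputable def hopT {n d : ℕ} (r : ℝ) (x y : Cfg n d) : ℝ :=
  if h : ∃ j, ∀ i, i ≠ j → x i = y i then
    ((max 1 (ptNorm (y h.choose - x h.choose)) : ℕ) : ℝ) ^ (-r)
  else 0

/-- The total interaction `U(x) = ∑_{j₁ < j₂} U(x_{j₁}, x_{j₂})` (Assumption B). -/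
def pairU {n d : ℕ} (U : Pt d → Pt d → ℝ) (x : Cfg n d) : ℝ :=
  ∑ p ∈ Finset.univ.filter (fun p : Fin n × Fin n => p.1 < p.2), U (x p.1) (x p.2)

/-- The `n`-particle Hamiltonian kernel
`H(x,y) = g⁻¹ (T(x,y) + δ_{xy} U(x)) + δ_{xy} ∑_j v(x_j)`
for a fixed realization `v : ℤ^d → ℝ` of the potential. -/
noncomputable def ham {n d : ℕ} (g r : ℝ) (U : Pt d → Pt d → ℝ) (v : Pt d → ℝ)
    (x y : Cfg n d) : ℝ :=
  (1 / g) * (hopT r x y + if x = y then pairU U x else 0) +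
    (if x = y then ∑ j, v (x j) else 0)

/-- `G` is the Green's function `(H_Λ - E)⁻¹` of the restriction of `H` to `Λ`
with Dirichlet boundary conditions. -/
def IsGreen {n d : ℕ} (Λ : Finset (Cfg n d)) (H : Cfg n d → Cfg n d → ℝ) (E : ℝ)
    (G : Cfg n d → Cfg n d → ℝ) : Prop :=
  (∀ x y, (x ∉ Λ ∨ y ∉ Λ) → G x y = 0) ∧
  (∀ x ∈ Λ, ∀ y ∈ Λ,
    ∑ z ∈ Λ, (H x z - if x = z then E else 0) * G z y = if x = y then 1 else 0) ∧
  (∀ x ∈ Λ, ∀ y ∈ Λ,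
    ∑ z ∈ Λ, G x z * (H z y - if z = y then E else 0) = if x = y then 1 else 0)

/-- `E` belongs to the spectrum of `H_Λ`, i.e. `H_Λ - E` is not invertible. -/
def SingE {n d : ℕ} (Λ : Finset (Cfg n d)) (H : Cfg n d → Cfg n d → ℝ) (E : ℝ) : Prop :=
  ¬ ∃ G, IsGreen Λ H E G

/-- Sobolev norm of a kernel supported on `Λ × Λ`:
`‖K‖_s² = C₀ ∑_{v} (sup_{x-y=v} |K(x,y)|)² ⟨v⟩^{2s}`. -/
noncomputable def sobNorm {n d : ℕ} (C0 : ℝ) (Λ : Finset (Cfg n d))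
    (K : Cfg n d → Cfg n d → ℝ) (s : ℝ) : ℝ :=
  Real.sqrt (C0 * ∑ v ∈ (Λ ×ˢ Λ).image (fun p => p.1 - p.2),
    ((((Λ ×ˢ Λ).filter (fun p => p.1 - p.2 = v)).sup
        (fun p => ‖K p.1 p.2‖₊) : NNReal) : ℝ) ^ 2 * ((jap v : ℕ) : ℝ) ^ (2 * s))

/-- `Λ` (a cube of radius `L`) is `(E,δ)`-nonsingular: the Green's function exists and
`‖G_Λ(E)‖_s ≤ L^{τ + δ s}` for all `s ∈ [s₀, r_n]`. -/
def IsNS {n d : ℕ} (C0 τ δ s0 rn : ℝ) (L : ℕ) (Λ : Finset (Cfg n d))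
    (H : Cfg n d → Cfg n d → ℝ) (E : ℝ) : Prop :=
  ∃ G, IsGreen Λ H E G ∧
    ∀ s : ℝ, s0 ≤ s → s ≤ rn → sobNorm C0 Λ G s ≤ (L : ℝ) ^ (τ + δ * s)

/-- `Λ` (a cube of radius `L`) is `E`-resonant: `dist(E, σ(H_Λ)) < L^{-β}`. -/
def IsER {n d : ℕ} (β : ℝ) (L : ℕ) (Λ : Finset (Cfg n d))
    (H : Cfg n d → Cfg n d → ℝ) (E : ℝ) : Prop :=
  ∃ E' : ℝ, SingE Λ H E' ∧ |E - E'| < (L : ℝ) ^ (-β)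

/-- The scales `L_k = L₀^{4^k}`. -/
def Lscale (L0 k : ℕ) : ℕ := L0 ^ (4 ^ k)

/-- `p^{(m)} = 18^{N-m} p₀`. -/
def pexp (N : ℕ) (p0 : ℝ) (m : ℕ) : ℝ := 18 ^ (N - m) * p0

/-- The energy interval `I = [-MN-1, MN+1]`. -/
def Ibox (M : ℝ) (N : ℕ) : Set ℝ := Set.Icc (-(M * N) - 1) (M * N + 1)

/-- Property `(SS.N.I.k.n)` at scale `Lk`: for every pair of separable `n`-particle
cubes of radius `Lk`, the probability that for some `E ∈ I` both cubes are
`(E,1/2)`-singular is `< Lk^{-2 p^{(n)}}`. -/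
def SSprop {d : ℕ} (n : ℕ) {Ω : Type} [MeasurableSpace Ω] (P : Measure Ω)
    (V : Pt d → Ω → ℝ) (g r : ℝ) (U : Pt d → Pt d → ℝ) (C0 : ℝ)
    (τ s0 rn : ℝ) (I : Set ℝ) (r0 Lk : ℕ) (pn : ℝ) : Prop :=
  ∀ u v : Cfg n d, Separable r0 Lk u v →
    P {ω | ∃ E ∈ I,
        ¬ IsNS C0 τ (1/2) s0 rn Lk (cube Lk u) (ham g r U fun a => V a ω) E ∧
        ¬ IsNS C0 τ (1/2) s0 rn Lk (cube Lk v) (ham g r U fun a => V a ω) E} <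
      ENNReal.ofReal ((Lk : ℝ) ^ (-(2 * pn)))

/-- The cube `Λ_{Lk1}(u)` is `(1/2, I)`-tunneling: it contains two separable
`(E,1/2)`-singular cubes of radius `Lk` for some `E ∈ I`. -/
def IsT {n d : ℕ} (C0 τ s0 rn : ℝ) (I : Set ℝ) (g r : ℝ) (U : Pt d → Pt d → ℝ)
    (v : Pt d → ℝ) (r0 Lk Lk1 : ℕ) (u : Cfg n d) : Prop :=
  ∃ E ∈ I, ∃ x y : Cfg n d,
    cube Lk x ⊆ cube Lk1 u ∧ cube Lk y ⊆ cube Lk1 u ∧ Separable r0 Lk x y ∧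
    ¬ IsNS C0 τ (1/2) s0 rn Lk (cube Lk x) (ham g r U v) E ∧
    ¬ IsNS C0 τ (1/2) s0 rn Lk (cube Lk y) (ham g r U v) E

/-- Restriction of a kernel to `Λ × Λ`. -/
def restrictKer {n d : ℕ} (Λ : Finset (Cfg n d)) (K : Cfg n d → Cfg n d → ℝ) :
    Cfg n d → Cfg n d → ℝ :=
  fun x y => if x ∈ Λ ∧ y ∈ Λ then K x y else 0

/-- Continuity modulus `ς(ε) = sup_t (μ(t+ε] - μ(t])` of the distribution function of `μ`. -/
noncomputable def contMod (μ : Measure ℝ) (ε : ℝ) : ℝ :=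
  ⨆ t : ℝ, (μ (Set.Ioc t (t + ε))).toReal

/-! ### Auxiliary geometry lemmas -/

section Geometry

variable {n d : ℕ}

lemma ptNorm_le_iff {x : Pt d} {m : ℕ} : ptNorm x ≤ m ↔ ∀ i, (x i).natAbs ≤ m := by
  simp [ptNorm, Finset.sup_le_iff]

lemma mem_cube_iff {L : ℕ} {u x : Cfg n d} :
    x ∈ cube L u ↔ ∀ j i, u j i - (L : ℤ) ≤ x j i ∧ x j i ≤ u j i + (L : ℤ) := by
  unfold cube
  rw [Finset.mem_Icc]
  constructor
  · rintro ⟨h1, h2⟩ j i; exact ⟨h1 j i, h2 j i⟩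
  · intro h; exact ⟨fun j i => (h j i).1, fun j i => (h j i).2⟩

lemma self_mem_cube {L : ℕ} (u : Cfg n d) : u ∈ cube L u := by
  rw [mem_cube_iff]; intro j i; omega

lemma ptNorm_sub_le_of_mem_cube {L : ℕ} {u x : Cfg n d} (hx : x ∈ cube L u) (j : Fin n) :
    ptNorm (x j - u j) ≤ L := by
  rw [mem_cube_iff] at hx
  rw [ptNorm_le_iff]
  intro i
  have := hx j i
  have : (x j - u j) i = x j i - u j i := rfl
  omega

lemma ptNorm_sub_comm (a b : Pt d) : ptNorm (a - b) = ptNorm (b - a) := by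
  unfold ptNorm
  congr 1
  funext i
  have h1 : (a - b) i = a i - b i := rfl
  have h2 : (b - a) i = b i - a i := rfl
  rw [h1, h2]
  omega

lemma ptNorm_triangle (a b c : Pt d) : ptNorm (a - c) ≤ ptNorm (a - b) + ptNorm (b - c) := by
  rw [ptNorm_le_iff]
  intro i
  have h1 : ((a - b) i).natAbs ≤ ptNorm (a - b) :=
    Finset.le_sup (f := fun i => ((a - b) i).natAbs) (Finset.mem_univ i)
  have h2 : ((b - c) i).natAbs ≤ ptNorm (b - c) :=
    Finset.le_sup (f := fun i => ((b - c) i).natAbs) (Finset.mem_univ i)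
  have e1 : (a - b) i = a i - b i := rfl
  have e2 : (b - c) i = b i - c i := rfl
  have e3 : (a - c) i = a i - c i := rfl
  rw [e1] at h1; rw [e2] at h2; rw [e3]
  omega

lemma mem_projFull_of_mem {Λ : Finset (Cfg n d)} {x : Cfg n d} (hx : x ∈ Λ) (j : Fin n) :
    x j ∈ projFull Λ := by
  unfold projFull projJ
  rw [Finset.mem_biUnion]
  exact ⟨j, Finset.mem_univ j, Finset.mem_image.mpr ⟨x, hx, rfl⟩⟩

lemma mem_projFull_iff {Λ : Finset (Cfg n d)} {a : Pt d} :
    a ∈ projFull Λ ↔ ∃ j, ∃ x ∈ Λ, x j = a := by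
  unfold projFull projJ
  simp [Finset.mem_biUnion, Finset.mem_image]

lemma exists_diag_pt {u : Cfg n d} {B : ℕ} (h : diagDist u ≤ B) :
    ∃ p : Pt d, ∀ j, ptNorm (u j - p) ≤ B := by
  have hne : {m : ℕ | ∃ x : Pt d, ∀ j, ptNorm (u j - x) ≤ m}.Nonempty := by
    refine ⟨cfgNorm u, fun _ => 0, fun j => ?_⟩
    have : u j - (fun _ => 0 : Pt d) = u j := by funext i; simp
    rw [this]
    exact Finset.le_sup (f := fun j => ptNorm (u j)) (Finset.mem_univ j)
  obtain ⟨p, hp⟩ := Nat.sInf_mem hne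
  exact ⟨p, fun j => le_trans (hp j) h⟩

/-- Two separable fully-interactive cubes have disjoint full projections
(complete separability), provided `11 r₀ ≤ L`. -/
lemma disjoint_projFull_of_separable (hn : 1 ≤ n) {r0 L : ℕ} (hL : 11 * r0 ≤ L)
    {x y : Cfg n d} (hsep : 11 * n * L < cfgNorm (x - y))
    (hx : IsFI r0 L x) (hy : IsFI r0 L y) :
    Disjoint (projFull (cube L x)) (projFull (cube L y)) := by
  rw [Finset.disjoint_left]
  intro a hax hay
  obtain ⟨j1, ξ, hξ, rfl⟩ := mem_projFull_iff.mp hax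
  obtain ⟨j2, η, hη, hηa⟩ := mem_projFull_iff.mp hay
  obtain ⟨p, hp⟩ := exists_diag_pt hx
  obtain ⟨q, hq⟩ := exists_diag_pt hy
  obtain ⟨js, _, hjs⟩ := (Finset.lt_sup_iff (f := fun j => ptNorm ((x - y) j))).mp hsep
  have hjs' : 11 * n * L < ptNorm (x js - y js) := by
    have : (x - y) js = x js - y js := rfl
    rwa [this] at hjs
  -- chain of triangle inequalities
  have t1 : ptNorm (x js - y js) ≤ ptNorm (x js - p) + ptNorm (p - y js) :=
    ptNorm_triangle _ _ _
  have t2 : ptNorm (p - y js) ≤ ptNorm (p - x j1) + ptNorm (x j1 - y js) :=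
    ptNorm_triangle _ _ _
  have t3 : ptNorm (x j1 - y js) ≤ ptNorm (x j1 - ξ j1) + ptNorm (ξ j1 - y js) :=
    ptNorm_triangle _ _ _
  have t4 : ptNorm (ξ j1 - y js) ≤ ptNorm (ξ j1 - y j2) + ptNorm (y j2 - y js) :=
    ptNorm_triangle _ _ _
  have t5 : ptNorm (y j2 - y js) ≤ ptNorm (y j2 - q) + ptNorm (q - y js) :=
    ptNorm_triangle _ _ _
  set K := 2 * n * (L + r0) with hK
  have b1 : ptNorm (x js - p) ≤ K := hp js
  have b2 : ptNorm (p - x j1) ≤ K := by rw [ptNorm_sub_comm]; exact hp j1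
  have b3 : ptNorm (x j1 - ξ j1) ≤ L := by rw [ptNorm_sub_comm]; exact ptNorm_sub_le_of_mem_cube hξ j1
  have b4 : ptNorm (ξ j1 - y j2) ≤ L := by
    have h5 : ptNorm (η j2 - y j2) ≤ L := ptNorm_sub_le_of_mem_cube hη j2
    rw [hηa] at h5; exact h5
  have b5 : ptNorm (y j2 - q) ≤ K := hq j2
  have b6 : ptNorm (q - y js) ≤ K := by rw [ptNorm_sub_comm]; exact hq js
  have hbig : ptNorm (x js - y js) ≤ 4 * K + 2 * L := by omega
  -- arithmetic contradiction
  have harith : 4 * K + 2 * L ≤ 11 * n * L := by rw [hK]; nlinarith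
  exact absurd hjs' (not_lt.mpr (le_trans hbig harith))

lemma center_mem_of_cube_subset {L L' : ℕ} {x u : Cfg n d}
    (h : cube L x ⊆ cube L' u) : x ∈ cube L' u :=
  h (self_mem_cube x)

end Geometry

/-! ### Matrix characterization of the Green's function -/

section MatrixChar

variable {n d : ℕ}

/-- Extension by zero of a function defined on a finite set of lattice points. -/
noncomputable def extS (S : Finset (Pt d)) (f : ↥S → ℝ) : Pt d → ℝ :=
  fun a => if h : a ∈ S then f ⟨a, h⟩ else 0

lemma ham_congr_of_eqOn {g r : ℝ} {U : Pt d → Pt d → ℝ} {v v' : Pt d → ℝ}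
    {Λ : Finset (Cfg n d)} (hv : ∀ a ∈ projFull Λ, v a = v' a)
    {x : Cfg n d} (hx : x ∈ Λ) (y : Cfg n d) :
    ham g r U v x y = ham g r U v' x y := by
  unfold ham
  by_cases hxy : x = y
  · simp only [if_pos hxy]
    congr 1
    exact Finset.sum_congr rfl fun j _ => hv (x j) (mem_projFull_of_mem hx j)
  · simp [hxy]

lemma isGreen_of_eqOn {g r : ℝ} {U : Pt d → Pt d → ℝ} {v v' : Pt d → ℝ}
    {Λ : Finset (Cfg n d)} (hv : ∀ a ∈ projFull Λ, v a = v' a) {E : ℝ}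
    {G : Cfg n d → Cfg n d → ℝ} :
    IsGreen Λ (ham g r U v) E G → IsGreen Λ (ham g r U v') E G := by
  rintro ⟨h1, h2, h3⟩
  refine ⟨h1, fun x hx y hy => ?_, fun x hx y hy => ?_⟩
  · rw [← h2 x hx y hy]
    exact Finset.sum_congr rfl fun z _ => by rw [ham_congr_of_eqOn hv hx z]
  · rw [← h3 x hx y hy]
    exact Finset.sum_congr rfl fun z hz => by rw [ham_congr_of_eqOn hv hz y]

lemma isNS_congr {C0 τ δ s0 rn : ℝ} {L : ℕ} {Λ : Finset (Cfg n d)} {g r : ℝ}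
    {U : Pt d → Pt d → ℝ} {v v' : Pt d → ℝ}
    (hv : ∀ a ∈ projFull Λ, v a = v' a) (E : ℝ) :
    IsNS C0 τ δ s0 rn L Λ (ham g r U v) E ↔ IsNS C0 τ δ s0 rn L Λ (ham g r U v') E := by
  have hsym : ∀ a ∈ projFull Λ, v' a = v a := fun a ha => (hv a ha).symm
  constructor <;> rintro ⟨G, hG, hbd⟩
  · exact ⟨G, isGreen_of_eqOn hv hG, hbd⟩
  · exact ⟨G, isGreen_of_eqOn hsym hG, hbd⟩

variable (g r : ℝ) (U : Pt d → Pt d → ℝ)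

/-- The matrix of `H_Λ - E` on the finite cube `Λ`. -/
noncomputable def hamMat (Λ : Finset (Cfg n d)) (v : Pt d → ℝ) (E : ℝ) :
    Matrix ↥Λ ↥Λ ℝ :=
  fun a b => ham g r U v (a : Cfg n d) (b : Cfg n d) -
    if (a : Cfg n d) = (b : Cfg n d) then E else 0

/-- The kernel on `ℤ^{nd} × ℤ^{nd}` associated to a matrix on `Λ × Λ`. -/
noncomputable def greenKer (Λ : Finset (Cfg n d)) (B : Matrix ↥Λ ↥Λ ℝ) :
    Cfg n d → Cfg n d → ℝ :=
  fun x y => if h : x ∈ Λ ∧ y ∈ Λ then B ⟨x, h.1⟩ ⟨y, h.2⟩ else 0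

lemma sum_cube_eq_mul_apply (Λ : Finset (Cfg n d)) (M B : Matrix ↥Λ ↥Λ ℝ)
    (a b : ↥Λ) (F Gf : Cfg n d → ℝ)
    (hF : ∀ c : ↥Λ, F (c : Cfg n d) = M a c) (hG : ∀ c : ↥Λ, Gf (c : Cfg n d) = B c b) :
    ∑ z ∈ Λ, F z * Gf z = (M * B) a b := by
  rw [Matrix.mul_apply, ← Finset.sum_coe_sort Λ (fun z => F z * Gf z)]
  exact Finset.sum_congr rfl fun c _ => by rw [hF c, hG c]

lemma greenKer_apply_mem {Λ : Finset (Cfg n d)} (B : Matrix ↥Λ ↥Λ ℝ)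
    (c : ↥Λ) {y : Cfg n d} (hy : y ∈ Λ) :
    greenKer Λ B (c : Cfg n d) y = B c ⟨y, hy⟩ := by
  unfold greenKer
  rw [dif_pos ⟨c.2, hy⟩, Subtype.coe_eta]

lemma greenKer_apply_mem' {Λ : Finset (Cfg n d)} (B : Matrix ↥Λ ↥Λ ℝ)
    {x : Cfg n d} (hx : x ∈ Λ) (c : ↥Λ) :
    greenKer Λ B x (c : Cfg n d) = B ⟨x, hx⟩ c := by
  unfold greenKer
  rw [dif_pos ⟨hx, c.2⟩, Subtype.coe_eta]

lemma isGreen_greenKer {Λ : Finset (Cfg n d)} {v : Pt d → ℝ} {E : ℝ}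
    (h : IsUnit (hamMat g r U Λ v E).det) :
    IsGreen Λ (ham g r U v) E (greenKer Λ (hamMat g r U Λ v E)⁻¹) := by
  refine ⟨?_, ?_, ?_⟩
  · intro x y hxy
    unfold greenKer
    rw [dif_neg]
    tauto
  · intro x hx y hy
    rw [sum_cube_eq_mul_apply Λ (hamMat g r U Λ v E) (hamMat g r U Λ v E)⁻¹
      ⟨x, hx⟩ ⟨y, hy⟩ _ _ (fun c => rfl)
      (fun c => greenKer_apply_mem _ c hy),
      Matrix.mul_nonsing_inv _ h, Matrix.one_apply]
    by_cases hxy : x = y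
    · simp [hxy]
    · rw [if_neg hxy, if_neg (by simp [Subtype.ext_iff]; exact hxy)]
  · intro x hx y hy
    rw [sum_cube_eq_mul_apply Λ (hamMat g r U Λ v E)⁻¹ (hamMat g r U Λ v E)
      ⟨x, hx⟩ ⟨y, hy⟩ _ _ (fun c => greenKer_apply_mem' _ hx c) (fun c => rfl),
      Matrix.nonsing_inv_mul _ h, Matrix.one_apply]
    by_cases hxy : x = y
    · simp [hxy]
    · rw [if_neg hxy, if_neg (by simp [Subtype.ext_iff]; exact hxy)]

lemma green_eq_greenKer {Λ : Finset (Cfg n d)} {v : Pt d → ℝ} {E : ℝ}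
    {G : Cfg n d → Cfg n d → ℝ} (hG : IsGreen Λ (ham g r U v) E G) :
    IsUnit (hamMat g r U Λ v E).det ∧ G = greenKer Λ (hamMat g r U Λ v E)⁻¹ := by
  set M := hamMat g r U Λ v E with hM
  set Gm : Matrix ↥Λ ↥Λ ℝ := fun a b => G (a : Cfg n d) (b : Cfg n d) with hGm
  have hMG : M * Gm = 1 := by
    ext a b
    rw [← sum_cube_eq_mul_apply Λ M Gm a b
      (fun z => ham g r U v (a : Cfg n d) z - if (a : Cfg n d) = z then E else 0)
      (fun z => G z (b : Cfg n d)) (fun c => rfl) (fun c => rfl),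
      hG.2.1 (a : Cfg n d) a.2 (b : Cfg n d) b.2, Matrix.one_apply]
    by_cases hab : a = b
    · simp [hab]
    · rw [if_neg (fun h => hab (Subtype.ext h)), if_neg hab]
  have hdet : IsUnit M.det := by
    have hd := congrArg Matrix.det hMG
    rw [Matrix.det_mul, Matrix.det_one] at hd
    exact IsUnit.of_mul_eq_one _ hd
  have hinv : M⁻¹ = Gm := Matrix.inv_eq_right_inv hMG
  refine ⟨hdet, ?_⟩
  funext x y
  by_cases hx : x ∈ Λ
  · by_cases hy : y ∈ Λ
    · rw [show greenKer Λ M⁻¹ x y = M⁻¹ ⟨x, hx⟩ ⟨y, hy⟩ from dif_pos ⟨hx, hy⟩, hinv]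
    · rw [show greenKer Λ M⁻¹ x y = 0 from dif_neg (by tauto), hG.1 x y (Or.inr hy)]
  · rw [show greenKer Λ M⁻¹ x y = 0 from dif_neg (by tauto), hG.1 x y (Or.inl hx)]

lemma isNS_iff_matrix {C0 τ δ s0 rn : ℝ} {L : ℕ} {Λ : Finset (Cfg n d)}
    {v : Pt d → ℝ} {E : ℝ} :
    IsNS C0 τ δ s0 rn L Λ (ham g r U v) E ↔
      (IsUnit (hamMat g r U Λ v E).det ∧ ∀ s : ℝ, s0 ≤ s → s ≤ rn →
        sobNorm C0 Λ (greenKer Λ (hamMat g r U Λ v E)⁻¹) s ≤ (L : ℝ) ^ (τ + δ * s)) := by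
  constructor
  · rintro ⟨G, hGr, hbd⟩
    obtain ⟨hu, hGeq⟩ := green_eq_greenKer g r U hGr
    exact ⟨hu, hGeq ▸ hbd⟩
  · rintro ⟨hu, hbd⟩
    exact ⟨_, isGreen_greenKer g r U hu, hbd⟩

end MatrixChar

/-! ### Topological measurability machinery -/

section Topology

/-- Every open set in a pseudo-emetric space is a countable union of closed sets. -/
lemma isOpen_eq_iUnion_closed {α : Type*} [PseudoEMetricSpace α] {O : Set α} (hO : IsOpen O) :
    ∃ K : ℕ → Set α, (∀ m, IsClosed (K m)) ∧ O = ⋃ m, K m := by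
  refine ⟨fun m => {z : α | (m : ENNReal)⁻¹ ≤ Metric.infEDist z Oᶜ}, fun m => ?_, ?_⟩
  · exact isClosed_le continuous_const Metric.continuous_infEDist
  · ext z
    simp only [Set.mem_iUnion, Set.mem_setOf_eq]
    constructor
    · intro hz
      have hne : Metric.infEDist z Oᶜ ≠ 0 := by
        intro h0
        have hcl : z ∈ closure Oᶜ := Metric.mem_closure_iff_infEDist_zero.mpr h0
        rw [hO.isClosed_compl.closure_eq] at hcl
        exact hcl hz
      obtain ⟨m, hm⟩ := ENNReal.exists_inv_nat_lt hne
      exact ⟨m, hm.le⟩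
    · rintro ⟨m, hm⟩
      by_contra hz
      rw [Metric.infEDist_zero_of_mem (Set.mem_compl hz)] at hm
      exact ENNReal.natCast_ne_top m (ENNReal.inv_eq_zero.mp (le_antisymm hm (zero_le (α := ENNReal))))

/-- The projection to the first factor of a closed set with bounded second coordinate
is closed. -/
lemma isClosed_proj {X : Type*} [TopologicalSpace X] {C : Set (X × ℝ)} (hC : IsClosed C)
    (a b : ℝ) (hsub : ∀ z ∈ C, z.2 ∈ Set.Icc a b) : IsClosed (Prod.fst '' C) := by
  have hcs : CompactSpace (Set.Icc a b) := isCompact_iff_compactSpace.mp isCompact_Icc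
  have hmap : Continuous fun p : X × (Set.Icc a b) => ((p.1, (p.2 : ℝ)) : X × ℝ) :=
    continuous_fst.prodMk (continuous_subtype_val.comp continuous_snd)
  have hC' : IsClosed ((fun p : X × (Set.Icc a b) => ((p.1, (p.2 : ℝ)) : X × ℝ)) ⁻¹' C) :=
    hC.preimage hmap
  have himg : Prod.fst '' C =
      Prod.fst '' ((fun p : X × (Set.Icc a b) => ((p.1, (p.2 : ℝ)) : X × ℝ)) ⁻¹' C) := by
    ext x
    constructor
    · rintro ⟨⟨x', E⟩, hmem, rfl⟩
      exact ⟨(x', ⟨E, hsub _ hmem⟩), hmem, rfl⟩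
    · rintro ⟨⟨x', E⟩, hmem, rfl⟩
      exact ⟨(x', (E : ℝ)), hmem, rfl⟩
  rw [himg]
  exact isClosedMap_fst_of_compactSpace _ hC'

lemma continuousAt_finset_sum' {α ι : Type*} [TopologicalSpace α] (F : Finset ι)
    (f : ι → α → ℝ) (x : α) (h : ∀ i ∈ F, ContinuousAt (f i) x) :
    ContinuousAt (fun y => ∑ i ∈ F, f i y) x :=
  tendsto_finset_sum _ h

lemma continuousAt_supnorm {α ι : Type*} [TopologicalSpace α] (F : Finset ι)
    (h : ι → α → ℝ) (x : α) (hh : ∀ p ∈ F, ContinuousAt (h p) x) :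
    ContinuousAt (fun z => ((F.sup fun p => ‖h p z‖₊ : NNReal) : ℝ)) x := by
  classical
  induction F using Finset.cons_induction with
  | empty => simpa using continuousAt_const
  | cons a F ha ih =>
    have h1 : ContinuousAt (fun z => (‖h a z‖₊ : ℝ)) x := by
      simp only [coe_nnnorm]
      exact (hh a (Finset.mem_cons_self a F)).norm
    have h2 := ih fun p hp => hh p (Finset.mem_cons.mpr (Or.inr hp))
    simp only [Finset.sup_cons, NNReal.coe_max]
    exact h1.max h2

lemma continuousAt_sobNorm {α : Type*} [TopologicalSpace α] {n d : ℕ}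
    (C0 : ℝ) (Λ : Finset (Cfg n d)) (s : ℝ) (K : α → Cfg n d → Cfg n d → ℝ) (x : α)
    (hK : ∀ p q : Cfg n d, ContinuousAt (fun z => K z p q) x) :
    ContinuousAt (fun z => sobNorm C0 Λ (K z) s) x := by
  unfold sobNorm
  have hin : ContinuousAt (fun z => C0 * ∑ v ∈ (Λ ×ˢ Λ).image (fun p => p.1 - p.2),
      ((((Λ ×ˢ Λ).filter (fun p => p.1 - p.2 = v)).sup
        (fun p => ‖K z p.1 p.2‖₊) : NNReal) : ℝ) ^ 2 * ((jap v : ℕ) : ℝ) ^ (2 * s)) x := by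
    refine ContinuousAt.mul continuousAt_const ?_
    refine continuousAt_finset_sum' _ _ _ fun v _ => ?_
    refine ContinuousAt.mul ?_ continuousAt_const
    exact ContinuousAt.pow (continuousAt_supnorm _ _ _ fun p _ => hK p.1 p.2) 2
  exact Real.continuous_sqrt.continuousAt.comp hin

end Topology

/-! ### The bad set of a pair of cubes and its measurability -/

section BadSet

variable {n d : ℕ} (g r : ℝ) (U : Pt d → Pt d → ℝ)

/-- The matrix `H_Λ - E` as a function of the potential values on `S` and the energy. -/
noncomputable def MzMat (S : Finset (Pt d)) (Λ : Finset (Cfg n d)) :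
    (↥S → ℝ) × ℝ → Matrix ↥Λ ↥Λ ℝ :=
  fun z => hamMat g r U Λ (extS S z.1) z.2

lemma continuous_extS_apply (S : Finset (Pt d)) (p : Pt d) :
    Continuous fun z : (↥S → ℝ) × ℝ => extS S z.1 p := by
  unfold extS
  by_cases hp : p ∈ S
  · simp only [dif_pos hp]
    exact (continuous_apply (⟨p, hp⟩ : ↥S)).comp continuous_fst
  · simp only [dif_neg hp]
    exact continuous_const

lemma continuous_MzMat (S : Finset (Pt d)) (Λ : Finset (Cfg n d)) :
    Continuous (MzMat g r U S Λ) := by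
  apply continuous_matrix
  intro a b
  show Continuous fun z : (↥S → ℝ) × ℝ =>
    ham g r U (extS S z.1) (a : Cfg n d) (b : Cfg n d) -
      (if (a : Cfg n d) = (b : Cfg n d) then z.2 else 0)
  unfold ham
  by_cases hab : (a : Cfg n d) = (b : Cfg n d)
  · simp only [if_pos hab]
    refine Continuous.sub (Continuous.add continuous_const ?_) continuous_snd
    exact continuous_finset_sum _ fun j _ => continuous_extS_apply S _
  · simp only [if_neg hab, add_zero, sub_zero]
    exact continuous_const

lemma continuousAt_greenKerInv {S : Finset (Pt d)} {Λ : Finset (Cfg n d)}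
    {z₀ : (↥S → ℝ) × ℝ} (hdet : (MzMat g r U S Λ z₀).det ≠ 0) (p q : Cfg n d) :
    ContinuousAt (fun z => greenKer Λ (MzMat g r U S Λ z)⁻¹ p q) z₀ := by
  by_cases hpq : p ∈ Λ ∧ q ∈ Λ
  · have h1 : ContinuousAt Ring.inverse (MzMat g r U S Λ z₀).det := by
      rw [Ring.inverse_eq_inv']
      exact continuousAt_inv₀ hdet
    have hinv : ContinuousAt (fun z => (MzMat g r U S Λ z)⁻¹) z₀ :=
      (continuousAt_matrix_inv _ h1).comp (continuous_MzMat g r U S Λ).continuousAt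
    have hentry : ContinuousAt (fun B : Matrix ↥Λ ↥Λ ℝ => B ⟨p, hpq.1⟩ ⟨q, hpq.2⟩)
        ((MzMat g r U S Λ z₀)⁻¹) :=
      ((continuous_apply _).comp (continuous_apply _)).continuousAt
    have heq : (fun z => greenKer Λ (MzMat g r U S Λ z)⁻¹ p q)
        = fun z => (MzMat g r U S Λ z)⁻¹ ⟨p, hpq.1⟩ ⟨q, hpq.2⟩ := by
      funext z; unfold greenKer; rw [dif_pos hpq]
    rw [heq]
    exact ContinuousAt.comp (g := fun B : Matrix ↥Λ ↥Λ ℝ => B ⟨p, hpq.1⟩ ⟨q, hpq.2⟩)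
      (f := fun z => (MzMat g r U S Λ z)⁻¹) hentry hinv
  · have heq : (fun z => greenKer Λ (MzMat g r U S Λ z)⁻¹ p q) = fun _ => (0 : ℝ) := by
      funext z; unfold greenKer; rw [dif_neg hpq]
    rw [heq]
    exact continuousAt_const

/-- The set of `(v|_S, E)` for which `Λ` is `(E,1/2)`-singular. -/
def badSet (C0 τ s0 rn : ℝ) (L : ℕ) (S : Finset (Pt d)) (Λ : Finset (Cfg n d)) :
    Set ((↥S → ℝ) × ℝ) :=
  {z | ¬ IsNS C0 τ (1/2) s0 rn L Λ (ham g r U (extS S z.1)) z.2}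

lemma badSet_eq (C0 τ s0 rn : ℝ) (L : ℕ) (S : Finset (Pt d)) (Λ : Finset (Cfg n d)) :
    badSet g r U C0 τ s0 rn L S Λ =
      {z | (MzMat g r U S Λ z).det = 0} ∪
      {z | (MzMat g r U S Λ z).det ≠ 0 ∧ ∃ s, s0 ≤ s ∧ s ≤ rn ∧
        (L : ℝ) ^ (τ + (1/2) * s) < sobNorm C0 Λ (greenKer Λ (MzMat g r U S Λ z)⁻¹) s} := by
  ext z
  simp only [badSet, Set.mem_setOf_eq, Set.mem_union]
  rw [isNS_iff_matrix g r U]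
  constructor
  · intro hns
    by_cases hdet : (MzMat g r U S Λ z).det = 0
    · exact Or.inl hdet
    · right
      refine ⟨hdet, ?_⟩
      by_contra hcon
      push_neg at hcon
      exact hns ⟨isUnit_iff_ne_zero.mpr hdet, fun s hs1 hs2 => hcon s hs1 hs2⟩
  · rintro (hdet | ⟨_, s, hs1, hs2, hlt⟩) ⟨hu, hbd⟩
    · exact hu.ne_zero hdet
    · exact absurd (hbd s hs1 hs2) (not_le.mpr hlt)

lemma isClosed_badC (S : Finset (Pt d)) (Λ : Finset (Cfg n d)) :
    IsClosed {z : (↥S → ℝ) × ℝ | (MzMat g r U S Λ z).det = 0} :=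
  isClosed_eq (continuous_MzMat g r U S Λ).matrix_det continuous_const

lemma isOpen_badO (C0 τ s0 rn : ℝ) (L : ℕ) (S : Finset (Pt d)) (Λ : Finset (Cfg n d)) :
    IsOpen {z : (↥S → ℝ) × ℝ | (MzMat g r U S Λ z).det ≠ 0 ∧ ∃ s, s0 ≤ s ∧ s ≤ rn ∧
        (L : ℝ) ^ (τ + (1/2) * s) < sobNorm C0 Λ (greenKer Λ (MzMat g r U S Λ z)⁻¹) s} := by
  rw [isOpen_iff_mem_nhds]
  rintro z₀ ⟨hdet, s, hs1, hs2, hlt⟩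
  have hsob : ContinuousAt (fun z => sobNorm C0 Λ (greenKer Λ (MzMat g r U S Λ z)⁻¹) s) z₀ :=
    continuousAt_sobNorm C0 Λ s _ z₀ fun p q => continuousAt_greenKerInv g r U hdet p q
  have hdc : ContinuousAt (fun z => (MzMat g r U S Λ z).det) z₀ :=
    (continuous_MzMat g r U S Λ).matrix_det.continuousAt
  have h1 : ∀ᶠ z in nhds z₀, (MzMat g r U S Λ z).det ≠ 0 := hdc.eventually_ne hdet
  have h2 : ∀ᶠ z in nhds z₀,
      (L : ℝ) ^ (τ + (1/2) * s) < sobNorm C0 Λ (greenKer Λ (MzMat g r U S Λ z)⁻¹) s :=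
    hsob.eventually (lt_mem_nhds hlt)
  have h3 := (h1.and h2).mono fun z hz =>
    (⟨hz.1, s, hs1, hs2, hz.2⟩ : (MzMat g r U S Λ z).det ≠ 0 ∧ ∃ s, s0 ≤ s ∧ s ≤ rn ∧
        (L : ℝ) ^ (τ + (1/2) * s) < sobNorm C0 Λ (greenKer Λ (MzMat g r U S Λ z)⁻¹) s)
  rwa [Filter.eventually_iff] at h3

lemma measurableSet_pairBad (C0 τ s0 rn : ℝ) (L : ℕ) (a b : ℝ)
    (S : Finset (Pt d)) (Λ1 Λ2 : Finset (Cfg n d)) :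
    MeasurableSet {f : ↥S → ℝ | ∃ E ∈ Set.Icc a b,
      ¬ IsNS C0 τ (1/2) s0 rn L Λ1 (ham g r U (extS S f)) E ∧
      ¬ IsNS C0 τ (1/2) s0 rn L Λ2 (ham g r U (extS S f)) E} := by
  obtain ⟨K1, hK1c, hK1⟩ := isOpen_eq_iUnion_closed (isOpen_badO g r U C0 τ s0 rn L S Λ1)
  obtain ⟨K2, hK2c, hK2⟩ := isOpen_eq_iUnion_closed (isOpen_badO g r U C0 τ s0 rn L S Λ2)
  have hset : {f : ↥S → ℝ | ∃ E ∈ Set.Icc a b,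
      ¬ IsNS C0 τ (1/2) s0 rn L Λ1 (ham g r U (extS S f)) E ∧
      ¬ IsNS C0 τ (1/2) s0 rn L Λ2 (ham g r U (extS S f)) E} =
      ⋃ mp : ℕ × ℕ, Prod.fst ''
        ({z : (↥S → ℝ) × ℝ | z.2 ∈ Set.Icc a b} ∩
         ({z | (MzMat g r U S Λ1 z).det = 0} ∪ K1 mp.1) ∩
         ({z | (MzMat g r U S Λ2 z).det = 0} ∪ K2 mp.2)) := by
    ext f
    simp only [Set.mem_setOf_eq, Set.mem_iUnion, Set.mem_image, Set.mem_inter_iff, Set.mem_union]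
    constructor
    · rintro ⟨E, hE, h1, h2⟩
      have hb1 : ((f, E) : (↥S → ℝ) × ℝ) ∈ badSet g r U C0 τ s0 rn L S Λ1 := h1
      have hb2 : ((f, E) : (↥S → ℝ) × ℝ) ∈ badSet g r U C0 τ s0 rn L S Λ2 := h2
      rw [badSet_eq] at hb1 hb2
      have hm1 : ∃ m1, ((f, E) : (↥S → ℝ) × ℝ) ∈
          {z | (MzMat g r U S Λ1 z).det = 0} ∪ K1 m1 := by
        rcases hb1 with hc | ho
        · exact ⟨0, Or.inl hc⟩
        · rw [hK1] at ho
          obtain ⟨m, hm⟩ := Set.mem_iUnion.mp ho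
          exact ⟨m, Or.inr hm⟩
      have hm2 : ∃ m2, ((f, E) : (↥S → ℝ) × ℝ) ∈
          {z | (MzMat g r U S Λ2 z).det = 0} ∪ K2 m2 := by
        rcases hb2 with hc | ho
        · exact ⟨0, Or.inl hc⟩
        · rw [hK2] at ho
          obtain ⟨m, hm⟩ := Set.mem_iUnion.mp ho
          exact ⟨m, Or.inr hm⟩
      obtain ⟨m1, hmm1⟩ := hm1
      obtain ⟨m2, hmm2⟩ := hm2
      exact ⟨(m1, m2), (f, E), ⟨⟨hE, hmm1⟩, hmm2⟩, rfl⟩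
    · rintro ⟨mp, z, ⟨⟨hE, hz1⟩, hz2⟩, rfl⟩
      refine ⟨z.2, hE, ?_, ?_⟩
      · have : z ∈ badSet g r U C0 τ s0 rn L S Λ1 := by
          rw [badSet_eq]
          rcases hz1 with hc | hk
          · exact Or.inl hc
          · exact Or.inr (by rw [hK1]; exact Set.mem_iUnion.mpr ⟨mp.1, hk⟩)
        exact this
      · have : z ∈ badSet g r U C0 τ s0 rn L S Λ2 := by
          rw [badSet_eq]
          rcases hz2 with hc | hk
          · exact Or.inl hc
          · exact Or.inr (by rw [hK2]; exact Set.mem_iUnion.mpr ⟨mp.2, hk⟩)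
        exact this
  rw [hset]
  refine MeasurableSet.iUnion fun mp => ?_
  refine (isClosed_proj ?_ a b ?_).measurableSet
  · refine IsClosed.inter (IsClosed.inter ?_ ?_) ?_
    · exact isClosed_Icc.preimage continuous_snd
    · exact (isClosed_badC g r U S Λ1).union (hK1c mp.1)
    · exact (isClosed_badC g r U S Λ2).union (hK2c mp.2)
  · rintro z ⟨⟨hE, _⟩, _⟩
    exact hE

lemma pairEvent_eq_preimage (C0 τ s0 rn : ℝ) (L : ℕ) (a b : ℝ) (Λ1 Λ2 : Finset (Cfg n d))
    {Ω : Type} [MeasurableSpace Ω] (V : Pt d → Ω → ℝ)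
    (S : Finset (Pt d)) (h1 : projFull Λ1 ⊆ S) (h2 : projFull Λ2 ⊆ S) :
    {ω | ∃ E ∈ Set.Icc a b,
        ¬ IsNS C0 τ (1/2) s0 rn L Λ1 (ham g r U fun p => V p ω) E ∧
        ¬ IsNS C0 τ (1/2) s0 rn L Λ2 (ham g r U fun p => V p ω) E} =
      (fun ω (p : ↥S) => V (p : Pt d) ω) ⁻¹'
        {f : ↥S → ℝ | ∃ E ∈ Set.Icc a b,
          ¬ IsNS C0 τ (1/2) s0 rn L Λ1 (ham g r U (extS S f)) E ∧
          ¬ IsNS C0 τ (1/2) s0 rn L Λ2 (ham g r U (extS S f)) E} := by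
  ext ω
  simp only [Set.mem_setOf_eq, Set.mem_preimage]
  have hagree : ∀ (Λ : Finset (Cfg n d)), projFull Λ ⊆ S → ∀ p ∈ projFull Λ,
      (fun p => V p ω) p = extS S (fun q : ↥S => V (q : Pt d) ω) p := by
    intro Λ hΛ p hp
    have hpS := hΛ hp
    simp only [extS, dif_pos hpS]
  constructor <;> rintro ⟨E, hE, hA, hB⟩
  · exact ⟨E, hE, fun h => hA ((isNS_congr (hagree Λ1 h1) E).mpr h),
      fun h => hB ((isNS_congr (hagree Λ2 h2) E).mpr h)⟩
  · exact ⟨E, hE, fun h => hA ((isNS_congr (hagree Λ1 h1) E).mp h),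
      fun h => hB ((isNS_congr (hagree Λ2 h2) E).mp h)⟩

end BadSet

/-! ### Independence of events over disjoint blocks of potential variables -/

section Indep

variable {d : ℕ} {Ω : Type} [MeasurableSpace Ω]

lemma indep_blocks (P : Measure Ω) [IsProbabilityMeasure P]
    (V : Pt d → Ω → ℝ) (hV : ∀ a, Measurable (V a))
    (hiid : iIndepFun V P) :
    ∀ (m : ℕ) (S : Fin m → Finset (Pt d)),
      (∀ i j, i ≠ j → Disjoint (S i) (S j)) →
      ∀ (B : ∀ j, Set (↥(S j) → ℝ)), (∀ j, MeasurableSet (B j)) →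
      P (⋂ j, (fun ω (p : ↥(S j)) => V (p : Pt d) ω) ⁻¹' B j) =
        ∏ j, P ((fun ω (p : ↥(S j)) => V (p : Pt d) ω) ⁻¹' B j) := by
  intro m
  induction m with
  | zero =>
    intro S _ B _
    rw [Set.iInter_of_empty]
    simp
  | succ m ih =>
    intro S hdisj B hB
    classical
    set T : Finset (Pt d) := (Finset.univ : Finset (Fin m)).biUnion (fun j => S j.succ) with hT
    have hST : Disjoint (S 0) T := by
      rw [hT, Finset.disjoint_biUnion_right]
      intro j _
      exact hdisj 0 j.succ (Fin.succ_ne_zero j).symm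
    have hindep := hiid.indepFun_finset (S 0) T hST hV
    have hsubT : ∀ (j : Fin m) (p : ↥(S j.succ)), (p : Pt d) ∈ T := by
      intro j p
      rw [hT]
      exact Finset.mem_biUnion.mpr ⟨j, Finset.mem_univ j, p.2⟩
    have hrestrmeas : ∀ j : Fin m,
        Measurable (fun (h : ↥T → ℝ) (p : ↥(S j.succ)) => h ⟨(p : Pt d), hsubT j p⟩) :=
      fun j => measurable_pi_lambda _ fun p => measurable_pi_apply _
    set B' : Set (↥T → ℝ) :=
      ⋂ j : Fin m, (fun (h : ↥T → ℝ) (p : ↥(S j.succ)) => h ⟨(p : Pt d), hsubT j p⟩) ⁻¹'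
        B j.succ with hB'
    have hB'meas : MeasurableSet B' :=
      MeasurableSet.iInter fun j => (hB j.succ).preimage (hrestrmeas j)
    have hRest : (⋂ j : Fin m, (fun ω (p : ↥(S j.succ)) => V (p : Pt d) ω) ⁻¹' B j.succ)
        = (fun ω (p : ↥T) => V (p : Pt d) ω) ⁻¹' B' := by
      ext ω
      simp only [hB', Set.mem_iInter, Set.mem_preimage]
    have hsplit : (⋂ j : Fin (m+1), (fun ω (p : ↥(S j)) => V (p : Pt d) ω) ⁻¹' B j)
        = ((fun ω (p : ↥(S 0)) => V (p : Pt d) ω) ⁻¹' B 0) ∩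
          ((fun ω (p : ↥T) => V (p : Pt d) ω) ⁻¹' B') := by
      rw [← hRest]
      ext ω
      simp only [Set.mem_iInter, Set.mem_inter_iff, Set.mem_preimage]
      exact Fin.forall_fin_succ
    rw [hsplit,
      (indepFun_iff_measure_inter_preimage_eq_mul.mp hindep) (B 0) B' (hB 0) hB'meas,
      ← hRest,
      ih (fun j => S j.succ)
        (fun i j hij => hdisj i.succ j.succ (fun hc => hij (Fin.succ_injective m hc)))
        (fun j => B j.succ) (fun j => hB j.succ),
      Fin.prod_univ_succ]

end Indep

/-- Index of the `b`-th member of the `j`-th pair among twelve cubes. -/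
def pairIdx (j : Fin 6) (b : Fin 2) : Fin 12 := ⟨2 * (j : ℕ) + (b : ℕ), by omega⟩

lemma pairIdx_ne {j j' : Fin 6} {b b' : Fin 2} (h : j ≠ j') : pairIdx j b ≠ pairIdx j' b' := by
  intro hc
  apply h
  have h1 : 2 * (j : ℕ) + (b : ℕ) = 2 * (j' : ℕ) + (b' : ℕ) := congrArg Fin.val hc
  have hb : (b : ℕ) < 2 := b.2
  have hb' : (b' : ℕ) < 2 := b'.2
  exact Fin.ext (by omega)

lemma pairIdx_ne' (j : Fin 6) : pairIdx j 0 ≠ pairIdx j 1 := by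
  intro hc
  have h1 : 2 * (j : ℕ) + ((0 : Fin 2) : ℕ) = 2 * (j : ℕ) + ((1 : Fin 2) : ℕ) :=
    congrArg Fin.val hc
  simp at h1

lemma card_cube {n d : ℕ} (L : ℕ) (u : Cfg n d) :
    (cube L u).card = (2 * L + 1) ^ (n * d) := by
  unfold cube
  simp only [Pi.card_Icc, Int.card_Icc]
  have h2 : ∀ (j : Fin n) (i : Fin d),
      (u j i + (L : ℤ) + 1 - (u j i - (L : ℤ))).toNat = 2 * L + 1 := by
    intro j i; omega
  rw [Finset.prod_congr rfl fun j _ => Finset.prod_congr rfl fun i _ => h2 j i]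
  rw [Finset.prod_const, Finset.prod_const, Finset.card_univ, Finset.card_univ,
    Fintype.card_fin, Fintype.card_fin, ← pow_mul, Nat.mul_comm d n]

/-- The event that both cubes around `x` and `y` are singular at a common energy. -/
def pairSet {n d : ℕ} {Ω : Type} (C0 τ s0 rn : ℝ) (I : Set ℝ) (g r : ℝ)
    (U : Pt d → Pt d → ℝ) (V : Pt d → Ω → ℝ) (L : ℕ) (x y : Cfg n d) : Set Ω :=
  {ω | ∃ E ∈ I,
      ¬ IsNS C0 τ (1/2) s0 rn L (cube L x) (ham g r U fun a => V a ω) E ∧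
      ¬ IsNS C0 τ (1/2) s0 rn L (cube L y) (ham g r U fun a => V a ω) E}

set_option maxHeartbeats 1000000 in
/-- Lemma 3.8: assuming `(SS.N.I.k.n)`, for any `n`-particle cube
`Λ_{L_{k+1}}(u)`, the probability that it contains (for some `E ∈ I`) twelve pairwise
separable FI `(E,1/2)`-singular cubes of radius `L_k` is at most
`C'(n,d) L_{k+1}^{-(7/3) p^{(n)}}`, for `L₀` large enough. -/
theorem statement12 {d N : ℕ} (hd : 1 ≤ d) (hN : 2 ≤ N)
    (n : ℕ) (hn1 : 1 ≤ n) (hnN : n ≤ N)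
    {Ω : Type} [MeasurableSpace Ω] (P : Measure Ω) [IsProbabilityMeasure P]
    (V : Pt d → Ω → ℝ) (hVmeas : ∀ a, Measurable (V a))
    (μ : Measure ℝ) [IsProbabilityMeasure μ]
    (hiid : iIndepFun V P)
    (hlaw : ∀ a, P.map (V a) = μ)
    (M : ℝ) (hM : 0 < M) (hsupp : μ (Set.Icc (-M) M) = 1)
    (ρ κ : ℝ) (hρ : 0 < ρ) (hκ : 0 < κ)
    (hHolder : ∃ κ0 > 0, ∀ a b : ℝ, a ≤ b → b - a ≤ κ0 →
        μ (Set.Icc a b) ≤ ENNReal.ofReal (κ⁻¹ * (b - a) ^ ρ))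
    (U : Pt d → Pt d → ℝ) (r0 : ℕ) (hr0 : 1 ≤ r0) (M1 : ℝ)
    (hUbdd : ∀ x x', |U x x'| ≤ M1) (hUsym : ∀ x x', U x x' = U x' x)
    (hUfin : ∀ x x', (r0 : ℕ) ≤ ptNorm (x - x') → U x x' = 0)
    (r C0 : ℝ) (hC0 : 0 < C0)
    (p0 β : ℝ) (hp0 : 20 * N * d ≤ p0) (hβ : 18 ^ N * p0 / (2 * ρ) ≤ β)
    (τ s0 rn : ℕ → ℝ)
    (hs0 : ∀ m, 1 ≤ m → m ≤ N → (m * d : ℝ) / 2 < s0 m)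
    (hs0rn : ∀ m, 1 ≤ m → m ≤ N → s0 m ≤ rn m)
    (hrnr : ∀ m, 1 ≤ m → m ≤ N → rn m < r - (m * d : ℝ) / 2)
    (hτβ : ∀ m, 1 ≤ m → m ≤ N → 4 * β + 7 * s0 m < τ m)
    (hrnτ : ∀ m, 1 ≤ m → m ≤ N → 2 * τ m + 4 * s0 m < rn m)
    (hτmono : ∀ m, 2 ≤ m → m ≤ N → τ (m - 1) + 3 * (d : ℝ) / 2 < τ m)
    (hrnmono : ∀ m, 2 ≤ m → m ≤ N → rn m < rn (m - 1) - (d : ℝ) / 2)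
    :
    ∃ Cp : ℝ, 0 < Cp ∧ ∃ L0star gstar : ℝ, 0 < L0star ∧ 0 < gstar ∧
      ∀ L0 : ℕ, L0star ≤ (L0 : ℝ) → ∀ g : ℝ, gstar ≤ |g| → ∀ k : ℕ,
        SSprop (d := d) n P V g r U C0 (τ n) (s0 n) (rn n) (Ibox M N) r0
          (Lscale L0 k) (pexp N p0 n) →
        ∀ u : Cfg n d,
          P {ω | ∃ E ∈ Ibox M N, ∃ w : Fin 12 → Cfg n d,
              (∀ i, cube (Lscale L0 k) (w i) ⊆ cube (Lscale L0 (k + 1)) u) ∧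
              (∀ i, IsFI r0 (Lscale L0 k) (w i)) ∧
              (∀ i j, i ≠ j → Separable r0 (Lscale L0 k) (w i) (w j)) ∧
              (∀ i, ¬ IsNS C0 (τ n) (1/2) (s0 n) (rn n) (Lscale L0 k)
                  (cube (Lscale L0 k) (w i)) (ham g r U fun a => V a ω) E)} ≤
            ENNReal.ofReal (Cp *
              (Lscale L0 (k + 1) : ℝ) ^ (-(7 / 3 * pexp N p0 n))) := by
  classical
  refine ⟨(3 : ℝ) ^ (n * d * 12), by positivity, max 2 (11 * (r0 : ℝ) + 1), 1,
    lt_of_lt_of_le (by norm_num) (le_max_left _ _), one_pos,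
    fun L0 hL0 g hg k hSS u => ?_⟩
  have hL0_2 : 2 ≤ L0 := by
    have h2 : (2 : ℝ) ≤ (L0 : ℝ) := le_trans (le_max_left _ _) hL0
    exact_mod_cast h2
  have h11L0 : 11 * r0 < L0 := by
    have h2 : 11 * (r0 : ℝ) + 1 ≤ (L0 : ℝ) := le_trans (le_max_right _ _) hL0
    have h3 : ((11 * r0 + 1 : ℕ) : ℝ) ≤ (L0 : ℝ) := by push_cast; linarith
    have h4 : 11 * r0 + 1 ≤ L0 := by exact_mod_cast h3
    omega
  set Lk := Lscale L0 k with hLkdef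
  set Lk1 := Lscale L0 (k + 1) with hLk1def
  have hL0Lk : L0 ≤ Lk := Nat.le_self_pow (by positivity) L0
  have hL0Lk1 : L0 ≤ Lk1 := Nat.le_self_pow (by positivity) L0
  have h11Lk : 11 * r0 ≤ Lk := le_trans (le_of_lt h11L0) hL0Lk
  have hLkk : Lk1 = Lk ^ 4 := by
    rw [hLk1def, hLkdef]
    unfold Lscale
    rw [pow_succ, pow_mul]
  set pn := pexp N p0 n with hpn
  set PS : Cfg n d → Cfg n d → Set Ω :=
    pairSet C0 (τ n) (s0 n) (rn n) (Ibox M N) g r U V Lk with hPS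
  set W : Finset (Fin 12 → Cfg n d) :=
    (Fintype.piFinset fun _ : Fin 12 => cube Lk1 u).filter
      (fun w => (∀ i, IsFI r0 Lk (w i)) ∧ ∀ i j, i ≠ j → Separable r0 Lk (w i) (w j))
    with hW
  -- covering by pair events
  have hcover : {ω | ∃ E ∈ Ibox M N, ∃ w : Fin 12 → Cfg n d,
      (∀ i, cube Lk (w i) ⊆ cube Lk1 u) ∧ (∀ i, IsFI r0 Lk (w i)) ∧
      (∀ i j, i ≠ j → Separable r0 Lk (w i) (w j)) ∧
      (∀ i, ¬ IsNS C0 (τ n) (1/2) (s0 n) (rn n) Lk (cube Lk (w i))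
        (ham g r U fun a => V a ω) E)} ⊆
      ⋃ w ∈ W, ⋂ j : Fin 6, PS (w (pairIdx j 0)) (w (pairIdx j 1)) := by
    rintro ω ⟨E, hE, w, hsub, hFI, hsepw, hsing⟩
    have hwW : w ∈ W := Finset.mem_filter.mpr
      ⟨Fintype.mem_piFinset.mpr (fun i => center_mem_of_cube_subset (hsub i)), hFI, hsepw⟩
    refine Set.mem_iUnion.mpr ⟨w, Set.mem_iUnion.mpr ⟨hwW, ?_⟩⟩
    exact Set.mem_iInter.mpr fun j => ⟨E, hE, hsing _, hsing _⟩
  -- probability of each intersection of six pair events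
  have hbound : ∀ w ∈ W, P (⋂ j : Fin 6, PS (w (pairIdx j 0)) (w (pairIdx j 1))) ≤
      ENNReal.ofReal ((Lk : ℝ) ^ (-(2 * pn))) ^ 6 := by
    intro w hwW
    obtain ⟨hpi, hFI, hsepw⟩ : w ∈ Fintype.piFinset (fun _ : Fin 12 => cube Lk1 u) ∧
        (∀ i, IsFI r0 Lk (w i)) ∧ (∀ i j, i ≠ j → Separable r0 Lk (w i) (w j)) := by
      have h := Finset.mem_filter.mp hwW
      exact ⟨h.1, h.2.1, h.2.2⟩
    set S : Fin 6 → Finset (Pt d) := fun j =>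
      projFull (cube Lk (w (pairIdx j 0))) ∪ projFull (cube Lk (w (pairIdx j 1))) with hS
    have hdisjS : ∀ i j, i ≠ j → Disjoint (S i) (S j) := by
      intro i j hij
      have hp : ∀ b b' : Fin 2, Disjoint (projFull (cube Lk (w (pairIdx i b))))
          (projFull (cube Lk (w (pairIdx j b')))) := fun b b' =>
        disjoint_projFull_of_separable hn1 h11Lk
          (hsepw _ _ (pairIdx_ne hij)).2 (hFI _) (hFI _)
      have hfin : Disjoint
          (projFull (cube Lk (w (pairIdx i 0))) ∪ projFull (cube Lk (w (pairIdx i 1))))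
          (projFull (cube Lk (w (pairIdx j 0))) ∪ projFull (cube Lk (w (pairIdx j 1)))) := by
        rw [Finset.disjoint_union_left, Finset.disjoint_union_right, Finset.disjoint_union_right]
        exact ⟨⟨hp 0 0, hp 0 1⟩, ⟨hp 1 0, hp 1 1⟩⟩
      exact hfin
    set Bj : ∀ j : Fin 6, Set (↥(S j) → ℝ) := fun j =>
      {f : ↥(S j) → ℝ | ∃ E ∈ Set.Icc (-(M * (N : ℝ)) - 1) (M * (N : ℝ) + 1),
        ¬ IsNS C0 (τ n) (1/2) (s0 n) (rn n) Lk (cube Lk (w (pairIdx j 0)))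
          (ham g r U (extS (S j) f)) E ∧
        ¬ IsNS C0 (τ n) (1/2) (s0 n) (rn n) Lk (cube Lk (w (pairIdx j 1)))
          (ham g r U (extS (S j) f)) E} with hBj
    have hBmeas : ∀ j, MeasurableSet (Bj j) := fun j =>
      measurableSet_pairBad g r U C0 (τ n) (s0 n) (rn n) Lk _ _ (S j) _ _
    have hAeq : ∀ j : Fin 6, PS (w (pairIdx j 0)) (w (pairIdx j 1)) =
        (fun ω (p : ↥(S j)) => V (p : Pt d) ω) ⁻¹' Bj j := fun j =>
      pairEvent_eq_preimage g r U C0 (τ n) (s0 n) (rn n) Lk _ _ _ _ V (S j)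
        Finset.subset_union_left Finset.subset_union_right
    have hprod := indep_blocks P V hVmeas hiid 6 S hdisjS Bj hBmeas
    have hcalc : P (⋂ j : Fin 6, PS (w (pairIdx j 0)) (w (pairIdx j 1)))
        = ∏ j : Fin 6, P (PS (w (pairIdx j 0)) (w (pairIdx j 1))) := by
      rw [Set.iInter_congr hAeq, hprod]
      exact (Finset.prod_congr rfl fun j _ => by rw [hAeq j]).symm
    rw [hcalc]
    have hle : ∀ j : Fin 6, P (PS (w (pairIdx j 0)) (w (pairIdx j 1))) ≤
        ENNReal.ofReal ((Lk : ℝ) ^ (-(2 * pn))) :=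
      fun j => le_of_lt (hSS _ _ (hsepw _ _ (pairIdx_ne' j)))
    calc ∏ j : Fin 6, P (PS (w (pairIdx j 0)) (w (pairIdx j 1)))
        ≤ ∏ _j : Fin 6, ENNReal.ofReal ((Lk : ℝ) ^ (-(2 * pn))) :=
          Finset.prod_le_prod' fun j _ => hle j
      _ = ENNReal.ofReal ((Lk : ℝ) ^ (-(2 * pn))) ^ 6 := by
          rw [Finset.prod_const, Finset.card_univ, Fintype.card_fin]
  -- real-number estimates
  have hL1R1 : (1 : ℝ) ≤ (Lk1 : ℝ) := by
    have : 1 ≤ Lk1 := le_trans (le_trans one_le_two hL0_2) hL0Lk1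
    exact_mod_cast this
  have hL1pos : (0 : ℝ) < (Lk1 : ℝ) := lt_of_lt_of_le one_pos hL1R1
  have hLknn : (0 : ℝ) ≤ (Lk : ℝ) := Nat.cast_nonneg _
  have hA4 : ((Lk1 : ℕ) : ℝ) = ((Lk : ℕ) : ℝ) ^ (4 : ℕ) := by rw [hLkk]; push_cast; ring
  have hX6 : ((Lk : ℝ) ^ (-(2 * pn))) ^ (6 : ℕ) = (Lk1 : ℝ) ^ (-(3 * pn)) := by
    rw [hA4, ← Real.rpow_natCast ((Lk : ℝ) ^ (-(2 * pn))) 6,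
      ← Real.rpow_natCast ((Lk : ℝ)) 4, ← Real.rpow_mul hLknn, ← Real.rpow_mul hLknn]
    congr 1
    push_cast
    ring
  have h18 : 18 * (n : ℝ) * d ≤ pn := by
    have hNn : (n : ℝ) ≤ (N : ℝ) := Nat.cast_le.mpr hnN
    have hd0 : (0 : ℝ) ≤ (d : ℝ) := Nat.cast_nonneg d
    have hn0 : (0 : ℝ) ≤ (n : ℝ) := Nat.cast_nonneg n
    have hp00 : (0 : ℝ) ≤ p0 := le_trans (by positivity) hp0
    have hone : (1 : ℝ) ≤ 18 ^ (N - n) := one_le_pow₀ (by norm_num)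
    have hpnp0 : p0 ≤ pn := by
      rw [hpn]
      unfold pexp
      nlinarith
    nlinarith [hp0]
  have hexp : ((n * d * 12 : ℕ) : ℝ) + (-(3 * pn)) ≤ -(7 / 3 * pn) := by
    push_cast
    nlinarith [h18]
  have hreal : ((((2 * Lk1 + 1) ^ (n * d)) ^ 12 : ℕ) : ℝ) * (Lk1 : ℝ) ^ (-(3 * pn)) ≤
      (3 : ℝ) ^ (n * d * 12) * (Lk1 : ℝ) ^ (-(7 / 3 * pn)) := by
    have h1 : ((((2 * Lk1 + 1) ^ (n * d)) ^ 12 : ℕ) : ℝ) = (2 * (Lk1 : ℝ) + 1) ^ (n * d * 12) := by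
      push_cast
      rw [← pow_mul]
    rw [h1]
    have h2 : (2 * (Lk1 : ℝ) + 1) ^ (n * d * 12) ≤ (3 * (Lk1 : ℝ)) ^ (n * d * 12) :=
      pow_le_pow_left₀ (by linarith) (by linarith) _
    have h4 : (Lk1 : ℝ) ^ (n * d * 12) * (Lk1 : ℝ) ^ (-(3 * pn)) =
        (Lk1 : ℝ) ^ (((n * d * 12 : ℕ) : ℝ) + (-(3 * pn))) := by
      rw [Real.rpow_add hL1pos, Real.rpow_natCast]
    have h5 : (Lk1 : ℝ) ^ (((n * d * 12 : ℕ) : ℝ) + (-(3 * pn))) ≤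
        (Lk1 : ℝ) ^ (-(7 / 3 * pn)) :=
      Real.rpow_le_rpow_of_exponent_le hL1R1 hexp
    calc (2 * (Lk1 : ℝ) + 1) ^ (n * d * 12) * (Lk1 : ℝ) ^ (-(3 * pn))
        ≤ (3 * (Lk1 : ℝ)) ^ (n * d * 12) * (Lk1 : ℝ) ^ (-(3 * pn)) :=
          mul_le_mul_of_nonneg_right h2 (Real.rpow_nonneg (le_of_lt hL1pos) _)
      _ = 3 ^ (n * d * 12) * ((Lk1 : ℝ) ^ (n * d * 12) * (Lk1 : ℝ) ^ (-(3 * pn))) := by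
          rw [mul_pow, mul_assoc]
      _ ≤ 3 ^ (n * d * 12) * (Lk1 : ℝ) ^ (-(7 / 3 * pn)) := by
          refine mul_le_mul_of_nonneg_left ?_ (by positivity)
          rw [h4]
          exact h5
  -- cardinality of the set of 12-tuples of centers
  have hWcard : W.card ≤ ((2 * Lk1 + 1) ^ (n * d)) ^ 12 := by
    calc W.card ≤ (Fintype.piFinset fun _ : Fin 12 => cube Lk1 u).card :=
          Finset.card_le_card (Finset.filter_subset _ _)
      _ = ∏ _i : Fin 12, (cube Lk1 u).card := Fintype.card_piFinset _
      _ = ((2 * Lk1 + 1) ^ (n * d)) ^ 12 := by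
          rw [card_cube, Finset.prod_const, Finset.card_univ, Fintype.card_fin]
  -- put everything together
  refine le_trans (measure_mono hcover) ?_
  refine le_trans (measure_biUnion_finset_le W _) ?_
  refine le_trans (Finset.sum_le_card_nsmul W _ _ hbound) ?_
  rw [nsmul_eq_mul]
  calc (W.card : ENNReal) * ENNReal.ofReal ((Lk : ℝ) ^ (-(2 * pn))) ^ 6
      ≤ ((((2 * Lk1 + 1) ^ (n * d)) ^ 12 : ℕ) : ENNReal) *
        ENNReal.ofReal ((Lk : ℝ) ^ (-(2 * pn))) ^ 6 :=
        mul_le_mul_left (by exact_mod_cast hWcard) _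
    _ = ENNReal.ofReal (((((2 * Lk1 + 1) ^ (n * d)) ^ 12 : ℕ) : ℝ) *
        (Lk1 : ℝ) ^ (-(3 * pn))) := by
        rw [← ENNReal.ofReal_pow (Real.rpow_nonneg hLknn _) 6, hX6,
          ENNReal.ofReal_mul (by positivity), ENNReal.ofReal_natCast]
    _ ≤ ENNReal.ofReal ((3 : ℝ) ^ (n * d * 12) * (Lk1 : ℝ) ^ (-(7 / 3 * pn))) :=
        ENNReal.ofReal_le_ofReal hreal

end MP
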